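/- For all nonnegative integers m, n, k the binomial coefficients satisfy the identity ∑_{l=0}^{k} C(n+1, k-l) C(m+1, l) (2l - k) = (m - n) C(m+n+1, k-1), where C(a,b) denotes the binomial coefficient and C(a,-1) = 0. -/

import Mathlib

lemma vander_aux (a b k : ℕ) :
    ∑ j ∈ Finset.range (k + 1), a.choose j * b.choose (k - j) = (a + b).choose k := by
  rw [Nat.add_choose_eq, Finset.Nat.sum_antidiagonal_eq_sum_range_succ_mk]

lemma sum_aux (a b k : ℕ) :
    ∑ l ∈ Finset.range (k + 2), l * (a + 1).choose l * (b + 1).choose (k + 1 - l)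
      = (a + 1) * (a + b + 1).choose k := by
  rw [Finset.sum_range_succ']
  simp only [Nat.zero_mul, add_zero, Nat.add_sub_add_right]
  have h : ∀ j ∈ Finset.range (k + 1),
      (j + 1) * (a + 1).choose (j + 1) * (b + 1).choose (k - j)
        = (a + 1) * (a.choose j * (b + 1).choose (k - j)) := by
    intro j _
    have := Nat.add_one_mul_choose_eq a j
    rw [show (j + 1) * (a + 1).choose (j + 1) = (a + 1).choose (j + 1) * (j + 1) by ring,
      ← this]
    ring
  rw [Finset.sum_congr rfl h, ← Finset.mul_sum, vander_aux a (b + 1) k]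
  ring_nf

/-- Binomial coefficient identity:
`∑_{l=0}^{k} C(n+1, k-l) C(m+1, l) (2l - k) = (m - n) C(m+n+1, k-1)`,
with the convention `C(a, -1) = 0` (relevant for `k = 0`). -/
theorem binom_identity (m n k : ℕ) :
    (∑ l ∈ Finset.range (k + 1),
        ((n + 1).choose (k - l) : ℤ) * ((m + 1).choose l : ℤ) * (2 * (l : ℤ) - (k : ℤ)))
      = ((m : ℤ) - (n : ℤ)) *
          (if k = 0 then 0 else ((m + n + 1).choose (k - 1) : ℤ)) := by
  cases k with
  | zero => simp
  | succ k =>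
    have h1 : ∑ l ∈ Finset.range (k + 2),
        l * (m + 1).choose l * (n + 1).choose (k + 1 - l)
          = (m + 1) * (m + n + 1).choose k := sum_aux m n k
    have h2 : ∑ l ∈ Finset.range (k + 2),
        (k + 1 - l) * (n + 1).choose (k + 1 - l) * (m + 1).choose l
          = (n + 1) * (m + n + 1).choose k := by
      rw [← Finset.sum_range_reflect]
      have h : ∀ j ∈ Finset.range (k + 2),
          (k + 1 - (k + 2 - 1 - j)) * (n + 1).choose (k + 1 - (k + 2 - 1 - j)) *
              (m + 1).choose (k + 2 - 1 - j)
            = j * (n + 1).choose j * (m + 1).choose (k + 1 - j) := by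
        intro j hj
        have hj' : j ≤ k + 1 := Nat.lt_succ_iff.mp (Finset.mem_range.mp hj)
        have : k + 2 - 1 - j = k + 1 - j := by omega
        rw [this, Nat.sub_sub_self hj']
      rw [Finset.sum_congr rfl h, sum_aux n m k]
      ring_nf
    have key : ∀ l ∈ Finset.range (k + 2),
        ((n + 1).choose (k + 1 - l) : ℤ) * ((m + 1).choose l : ℤ)
            * (2 * (l : ℤ) - ((k : ℕ) + 1 : ℤ))
          = ((l * (m + 1).choose l * (n + 1).choose (k + 1 - l) : ℕ) : ℤ)
            - (((k + 1 - l) * (n + 1).choose (k + 1 - l) * (m + 1).choose l : ℕ) : ℤ) := by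
      intro l hl
      have hl' : l ≤ k + 1 := Nat.lt_succ_iff.mp (Finset.mem_range.mp hl)
      push_cast [Nat.cast_sub hl']
      ring
    rw [show k + 1 + 1 = k + 2 from rfl] at *
    push_cast
    rw [Finset.sum_congr rfl key, Finset.sum_sub_distrib, ← Nat.cast_sum, ← Nat.cast_sum,
      h1, h2]

    
    push_cast
    ring_nf
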